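/- Let (R,𝓡) be a filtered ring, (M,𝓜) a filtered left R-module whose filtration 𝓜 is discrete (i.e. F_i𝓜 = 0 for all sufficiently small i), and N a left R-submodule of M with the induced filtration 𝓝. If N ⊊ M, then Gr𝓝 ⊊ Gr𝓜 as graded left Gr𝓡-submodules. -/

import Mathlib

namespace FilteredPaper

variable {R : Type} [Ring R]

/-- `F` is a filtration of the ring `R`. -/
structure IsRingFiltration (F : ℤ → AddSubgroup R) : Prop where
  exhaustive : ∀ r : R, ∃ i, r ∈ F i
  mono : ∀ i : ℤ, F (i - 1) ≤ F i
  mul_mem : ∀ {i j : ℤ} {r s : R}, r ∈ F i → s ∈ F j → r * s ∈ F (i + j)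
  bot : ∀ i < 0, F i = ⊥
  one_mem : (1 : R) ∈ F 0

/-- `FM` is an `F`-filtration of the left `R`-module `M`. -/
structure IsModuleFiltration (F : ℤ → AddSubgroup R) {M : Type} [AddCommGroup M]
    [Module R M] (FM : ℤ → AddSubgroup M) : Prop where
  exhaustive : ∀ m : M, ∃ i, m ∈ FM i
  mono : ∀ i : ℤ, FM (i - 1) ≤ FM i
  smul_mem : ∀ {i j : ℤ} {r : R} {m : M}, r ∈ F i → m ∈ FM j → r • m ∈ FM (i + j)

/-- A realization of the associated graded ring `Gr𝓡 = ⊕ᵢ Fᵢ/Fᵢ₋₁` of the filtered ring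
`(R,F)` as a ring `A`: the map `emb i` sends `x ∈ Fᵢ` to its symbol
`σᵢ(x) = x + Fᵢ₋₁ ∈ Grᵢ𝓡 ⊆ A`; it is additive with kernel `Fᵢ₋₁`, the symbol maps are
multiplicative, and `A` is the internal direct sum of the images. -/
structure GrRingReal (F : ℤ → AddSubgroup R) (A : Type) [Ring A] where
  emb : ∀ i : ℤ, F i →+ A
  emb_eq_zero_iff : ∀ (i : ℤ) (x : F i), emb i x = 0 ↔ (x : R) ∈ F (i - 1)
  emb_mul : ∀ (i j : ℤ) (x : F i) (y : F j) (h : (x : R) * (y : R) ∈ F (i + j)),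
      emb i x * emb j y = emb (i + j) ⟨(x : R) * y, h⟩
  emb_one : ∀ h : (1 : R) ∈ F 0, emb 0 ⟨1, h⟩ = 1
  internal : DirectSum.IsInternal fun i : ℤ => (emb i).range

/-- A realization of the associated graded module `Gr𝓜 = ⊕ᵢ FMᵢ/FMᵢ₋₁` of a filtered
left `R`-module `(M,FM)` as a left module `G` over (a realization `A` of) `Gr𝓡`. -/
structure GrModuleReal (F : ℤ → AddSubgroup R) {M : Type} [AddCommGroup M] [Module R M]
    (FM : ℤ → AddSubgroup M) {A : Type} [Ring A] (re : GrRingReal F A)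
    (G : Type) [AddCommGroup G] [Module A G] where
  emb : ∀ i : ℤ, FM i →+ G
  emb_eq_zero_iff : ∀ (i : ℤ) (x : FM i), emb i x = 0 ↔ (x : M) ∈ FM (i - 1)
  emb_smul : ∀ (i j : ℤ) (r : F i) (m : FM j) (h : (r : R) • (m : M) ∈ FM (i + j)),
      re.emb i r • emb j m = emb (i + j) ⟨(r : R) • (m : M), h⟩
  internal : DirectSum.IsInternal fun i : ℤ => (emb i).range

/-- The ideal `Gr𝓢` of (the realization `A` of) `Gr𝓡` determined by a subset `S ⊆ R`
carrying the induced filtration `Fᵢ ∩ S`: it is generated (indeed spanned) by the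
symbols of the elements of `S`. -/
def grIdealOf {F : ℤ → AddSubgroup R} {A : Type} [Ring A] (re : GrRingReal F A)
    (S : Set R) : Ideal A :=
  Ideal.span {a : A | ∃ (i : ℤ) (x : F i), (x : R) ∈ S ∧ re.emb i x = a}

/-- The induced filtration on the quotient module `M ⧸ N`. -/
def quotFil {M : Type} [AddCommGroup M] [Module R M] (FM : ℤ → AddSubgroup M)
    (N : Submodule R M) : ℤ → AddSubgroup (M ⧸ N) :=
  fun i => (FM i).map N.mkQ.toAddMonoidHom

/-- `FM` is a good `F`-filtration of the left `R`-module `M`: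
`FMᵢ = Σⱼ F_{i-pⱼ} · gⱼ` for finitely many `gⱼ ∈ M`, `pⱼ ∈ ℤ`. -/
def IsGoodFiltration (F : ℤ → AddSubgroup R) {M : Type} [AddCommGroup M] [Module R M]
    (FM : ℤ → AddSubgroup M) : Prop :=
  IsModuleFiltration F FM ∧
  ∃ (t : ℕ) (g : Fin t → M) (p : Fin t → ℤ), ∀ i : ℤ,
    FM i = ⨆ j : Fin t, (F (i - p j)).map ((smulAddHom R M).flip (g j))

/-- The filtration induced by `FM` on a submodule `N ≤ M` is good (with the generators
`gⱼ` lying in `N`, the equality being read inside `M`). -/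
def InducedGoodOn (F : ℤ → AddSubgroup R) {M : Type} [AddCommGroup M] [Module R M]
    (FM : ℤ → AddSubgroup M) (N : Submodule R M) : Prop :=
  ∃ (t : ℕ) (g : Fin t → M) (p : Fin t → ℤ), (∀ j, g j ∈ N) ∧
    ∀ i : ℤ, FM i ⊓ N.toAddSubgroup =
      ⨆ j : Fin t, (F (i - p j)).map ((smulAddHom R M).flip (g j))

end FilteredPaper

set_option synthInstance.maxHeartbeats 1000000 in
set_option maxHeartbeats 1600000 in
open FilteredPaper in
/-- strict monotony of `Gr` for discrete filtrations: if the module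
filtration `𝓜` is discrete and `N ⊊ M`, then `Gr𝓝 ⊊ Gr𝓜` (i.e. the graded submodule
of (a realization `G` of) `Gr𝓜` spanned by the symbols of elements of `N` is proper). -/
theorem statement_11 (R : Type) [Ring R] (F : ℤ → AddSubgroup R)
    (hF : IsRingFiltration F)
    (M : Type) [AddCommGroup M] [Module R M]
    (FM : ℤ → AddSubgroup M) (hFM : IsModuleFiltration F FM)
    (hdisc : ∃ i₀ : ℤ, ∀ i ≤ i₀, FM i = ⊥)
    (N : Submodule R M) (hN : N < ⊤)
    (A : Type) [Ring A] (re : GrRingReal F A)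
    (G : Type) [AddCommGroup G] [Module A G] (reM : GrModuleReal F FM re G) :
    Submodule.span A
        {g : G | ∃ (i : ℤ) (x : FM i), (x : M) ∈ N ∧ reM.emb i x = g} <
      (⊤ : Submodule A G) := by
  
  -- Setup: pick an element of minimal degree not in `N`.
  obtain ⟨i₀, hi₀⟩ := hdisc
  obtain ⟨m₀, -, hm₀⟩ := SetLike.exists_of_lt hN
  have hP : ∃ i : ℤ, ∃ x ∈ FM i, x ∉ N := by
    obtain ⟨i, hi⟩ := hFM.exhaustive m₀
    exact ⟨i, m₀, hi, hm₀⟩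
  obtain ⟨i, ⟨x, hx, hxN⟩, hleast⟩ :=
    Int.exists_least_of_bdd (P := fun i => ∃ x ∈ FM i, x ∉ N)
      ⟨i₀ + 1, by
        intro z hz
        by_contra hzi
        push_neg at hzi
        obtain ⟨y, hy, hyN⟩ := hz
        rw [hi₀ z (by omega)] at hy
        exact hyN (by simp_all)⟩ hP
  have hFMi1 : ∀ y ∈ FM (i - 1), y ∈ N := by
    intro y hy
    by_contra hyN
    have := hleast (i - 1) ⟨y, hy, hyN⟩
    omega
  classical
  -- The graded subgroups generated by symbols of elements of `N`.
  set K : ℤ → AddSubgroup G := fun j =>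
    AddSubgroup.map (reM.emb j) (AddSubgroup.comap (FM j).subtype N.toAddSubgroup) with hK
  set T : AddSubgroup G := ⨆ j, K j with hT
  -- The projection onto the `i`-th component of `G`.
  set e : DirectSum ℤ (fun j => ↥((reM.emb j).range)) ≃+ G :=
    AddEquiv.ofBijective (DirectSum.coeAddMonoidHom fun j => (reM.emb j).range) reM.internal
    with he
  set π : G → G := fun g => ((e.symm g) i : G) with hπdef
  have he_apply : ∀ s, e s = DirectSum.coeAddMonoidHom (fun j => (reM.emb j).range) s :=
    fun s => rfl
  have hπ_emb : ∀ (j : ℤ) (y : FM j),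
      e.symm (reM.emb j y) =
        DirectSum.of (fun k => ((reM.emb k).range : AddSubgroup G)) j
          ⟨reM.emb j y, ⟨y, rfl⟩⟩ := by
    intro j y
    apply e.injective
    rw [AddEquiv.apply_symm_apply, he_apply, DirectSum.coeAddMonoidHom_of]
  have hπ_same : ∀ y : FM i, π (reM.emb i y) = reM.emb i y := by
    intro y
    simp only [hπdef, hπ_emb, DirectSum.of_eq_same]
  have hπ_ne : ∀ j : ℤ, j ≠ i → ∀ y : FM j, π (reM.emb j y) = 0 := by
    intro j hj y
    simp only [hπdef, hπ_emb]
    rw [DirectSum.of_eq_of_ne _ _ _ hj.symm]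
    rfl
  have hπ_zero : π 0 = 0 := by simp [hπdef]
  have hπ_add : ∀ g g', π (g + g') = π g + π g' := by
    intro g g'
    simp only [hπdef, map_add, DirectSum.add_apply, AddSubgroup.coe_add]
  -- `T` is closed under scalar multiplication by elements of `A`.
  have hsmulT : ∀ (a : A) (g : G), g ∈ T → a • g ∈ T := by
    intro a g hg
    obtain ⟨s, rfl⟩ := re.internal.surjective a
    induction s using DirectSum.induction_on with
    | zero => simpa using T.zero_mem
    | of k r =>
      rw [DirectSum.coeAddMonoidHom_of]
      obtain ⟨a', ha'⟩ := r
      obtain ⟨r, rfl⟩ := ha'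
      show re.emb k r • g ∈ T
      refine AddSubgroup.iSup_induction (C := fun g => re.emb k r • g ∈ T) K hg ?_ ?_ ?_
      · rintro j g hg
        obtain ⟨y, hyN, rfl⟩ := hg
        have hmem : (r : R) • (y : M) ∈ FM (k + j) := hFM.smul_mem r.2 y.2
        rw [reM.emb_smul k j r y hmem]
        refine AddSubgroup.mem_iSup_of_mem (k + j) ?_
        exact ⟨⟨(r : R) • (y : M), hmem⟩, N.smul_mem _ hyN, rfl⟩
      · simpa using T.zero_mem
      · intro g g' h h'
        rw [smul_add]
        exact T.add_mem h h'
    | add s s' h h' =>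
      rw [map_add, add_smul]
      exact T.add_mem h h'
  -- The span is contained in `T`.
  have hspanT : ∀ g ∈ Submodule.span A
      {g : G | ∃ (i : ℤ) (x : FM i), (x : M) ∈ N ∧ reM.emb i x = g}, g ∈ T := by
    intro g hg
    induction hg using Submodule.span_induction with
    | mem g hg =>
      obtain ⟨j, y, hyN, rfl⟩ := hg
      exact AddSubgroup.mem_iSup_of_mem j ⟨y, hyN, rfl⟩
    | zero => exact T.zero_mem
    | add g g' _ _ h h' => exact T.add_mem h h'
    | smul a g _ h => exact hsmulT a g h
  -- The projection of any element of `T` lies in `K i`.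
  have hTK : ∀ g ∈ T, π g ∈ K i := by
    intro g hg
    refine AddSubgroup.iSup_induction (C := fun g => π g ∈ K i) K hg ?_ ?_ ?_
    · rintro j g hg
      obtain ⟨y, hyN, rfl⟩ := hg
      by_cases hj : j = i
      · subst hj
        rw [hπ_same]
        exact ⟨y, hyN, rfl⟩
      · rw [hπ_ne j hj]
        exact (K i).zero_mem
    · show π 0 ∈ K i
      rw [hπ_zero]; exact (K i).zero_mem
    · intro g g' h h'
      show π (g + g') ∈ K i
      rw [hπ_add]
      exact (K i).add_mem h h'
  -- Conclude.
  refine lt_top_iff_ne_top.mpr fun htop => ?_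
  have hmem : reM.emb i ⟨x, hx⟩ ∈ T := by
    apply hspanT
    rw [htop]
    trivial
  have := hTK _ hmem
  rw [hπ_same] at this
  obtain ⟨y, hyN, hy⟩ := this
  have h0 : reM.emb i (⟨x, hx⟩ - y) = 0 := by
    rw [map_sub, hy, sub_self]
  rw [reM.emb_eq_zero_iff] at h0
  have : x - (y : M) ∈ N := hFMi1 _ h0
  have : x ∈ N := by
    have := N.add_mem this hyN
    simpa using this
  exact hxN this
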